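/- Let N ≥ 1 and let P be a Markov transition kernel on ℤ₊^N. Assume: (i) P is skip-free with some constant b₀ > 0, i.e. P(x, {y : |‖y‖ − ‖x‖| ≤ b₀}) = 1 for every x; (ii) P is 0-irreducible, i.e. for every x there exists t ∈ ℕ with P^t(x, {0}) > 0; (iii) the chain is geometrically ergodic: there exist an invariant probability measure π for P and a constant θ > 0 such that for every pair of states x, y, e^{θ t}·|P^t(x, {y}) − π({y})| → 0 as t → ∞. Then π has an exponential tail: there exists θ′ > 0 such that ∑_{x ∈ ℤ₊^N} π({x})·e^{θ′ ‖x‖} < ∞. -/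

import Mathlib

open Filter Real

def l1 {N : ℕ} (x : Fin N → ℕ) : ℝ := ∑ i, (x i : ℝ)

noncomputable def iterK {N : ℕ} (P : (Fin N → ℕ) → (Fin N → ℕ) → ℝ) :
    ℕ → (Fin N → ℕ) → (Fin N → ℕ) → ℝ
  | 0 => fun x y => if x = y then 1 else 0
  | t + 1 => fun x y => ∑' z, P x z * iterK P t z y

namespace ExpTail

lemma l1_nonneg {N : ℕ} (x : Fin N → ℕ) : 0 ≤ l1 x :=
  Finset.sum_nonneg fun i _ => Nat.cast_nonneg _

lemma l1_zero {N : ℕ} : l1 (0 : Fin N → ℕ) = 0 := by simp [l1]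

lemma ne_zero_of_l1_pos {N : ℕ} {x : Fin N → ℕ} (h : 0 < l1 x) : x ≠ 0 := by
  rintro rfl; rw [l1_zero] at h; exact lt_irrefl _ h

variable {N : ℕ} {P : (Fin N → ℕ) → (Fin N → ℕ) → ℝ}

lemma summable_mul_of_le (hP0 : ∀ x y, 0 ≤ P x y) (hP1 : ∀ x, HasSum (P x) 1)
    {W : (Fin N → ℕ) → ℝ} (hW0 : ∀ z, 0 ≤ W z) (hW1 : ∀ z, W z ≤ 1) (x : Fin N → ℕ) :
    Summable (fun z => P x z * W z) :=
  Summable.of_nonneg_of_le (fun z => mul_nonneg (hP0 x z) (hW0 z))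
    (fun z => mul_le_of_le_one_right (hP0 x z) (hW1 z)) (hP1 x).summable

lemma tsum_mul_le_one (hP0 : ∀ x y, 0 ≤ P x y) (hP1 : ∀ x, HasSum (P x) 1)
    {W : (Fin N → ℕ) → ℝ} (hW0 : ∀ z, 0 ≤ W z) (hW1 : ∀ z, W z ≤ 1) (x : Fin N → ℕ) :
    ∑' z, P x z * W z ≤ 1 := by
  have h := Summable.tsum_le_tsum (f := fun z => P x z * W z) (g := P x)
    (fun z => mul_le_of_le_one_right (hP0 x z) (hW1 z))
    (summable_mul_of_le hP0 hP1 hW0 hW1 x) (hP1 x).summable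
  rwa [(hP1 x).tsum_eq] at h

lemma iterK_nonneg (hP0 : ∀ x y, 0 ≤ P x y) :
    ∀ (t : ℕ) (x y : Fin N → ℕ), 0 ≤ iterK P t x y
  | 0, x, y => by dsimp [iterK]; split <;> norm_num
  | (t+1), x, y => by
      dsimp [iterK]
      exact tsum_nonneg fun z => mul_nonneg (hP0 x z) (iterK_nonneg hP0 t z y)

lemma iterK_le_one (hP0 : ∀ x y, 0 ≤ P x y) (hP1 : ∀ x, HasSum (P x) 1) :
    ∀ (t : ℕ) (x y : Fin N → ℕ), iterK P t x y ≤ 1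
  | 0, x, y => by dsimp [iterK]; split <;> norm_num
  | (t+1), x, y => by
      dsimp [iterK]
      exact tsum_mul_le_one hP0 hP1 (fun z => iterK_nonneg hP0 t z y)
        (fun z => iterK_le_one hP0 hP1 t z y) x


lemma P_zero_of_far (hP0 : ∀ x y, 0 ≤ P x y) (hP1 : ∀ x, HasSum (P x) 1)
    {b₀ : ℝ}
    (hskip : ∀ x, ∑' y : {y : Fin N → ℕ // |l1 y - l1 x| ≤ b₀}, P x (y : Fin N → ℕ) = 1)
    {x y : Fin N → ℕ} (hfar : b₀ < |l1 y - l1 x|) : P x y = 0 := by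
  set s : Set (Fin N → ℕ) := {y | |l1 y - l1 x| ≤ b₀} with hs
  have hsub1 : Summable ((P x) ∘ ((↑) : s → Fin N → ℕ)) := (hP1 x).summable.subtype s
  have hsub2 : Summable ((P x) ∘ ((↑) : ↥sᶜ → Fin N → ℕ)) := (hP1 x).summable.subtype sᶜ
  have hsplit := Summable.tsum_add_tsum_compl (f := P x) hsub1 hsub2
  have h1 : (∑' z : s, P x z) = 1 := hskip x
  have h2 : (∑' z : ↥sᶜ, P x z) = 0 := by
    have := (hP1 x).tsum_eq
    rw [h1, this] at hsplit; linarith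
  have hy : y ∈ sᶜ := by simp [hs, Set.mem_setOf_eq, not_le.mpr hfar]
  have hle : P x y ≤ ∑' z : ↥sᶜ, P x z := by
    have := Summable.le_tsum hsub2 (⟨y, hy⟩ : ↥sᶜ) (fun j _ => hP0 x j)
    simpa using this
  exact le_antisymm (h2 ▸ hle) (hP0 x y)

noncomputable def hp (P : (Fin N → ℕ) → (Fin N → ℕ) → ℝ) : ℕ → (Fin N → ℕ) → ℝ
  | 0 => fun _ => 0
  | s + 1 => fun x => ∑' z, P x z * (if z = 0 then (if s = 0 then 1 else 0) else hp P s z)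

lemma hp_nonneg (hP0 : ∀ x y, 0 ≤ P x y) :
    ∀ (s : ℕ) (x : Fin N → ℕ), 0 ≤ hp P s x
  | 0, x => le_refl _
  | (s+1), x => tsum_nonneg fun z => mul_nonneg (hP0 x z) (by
      split
      · split <;> norm_num
      · exact hp_nonneg hP0 s z)

lemma hp_le_one (hP0 : ∀ x y, 0 ≤ P x y) (hP1 : ∀ x, HasSum (P x) 1) :
    ∀ (s : ℕ) (x : Fin N → ℕ), hp P s x ≤ 1
  | 0, x => zero_le_one
  | (s+1), x => by
      dsimp [hp]
      refine tsum_mul_le_one hP0 hP1 (fun z => ?_) (fun z => ?_) x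
      · split
        · split <;> norm_num
        · exact hp_nonneg hP0 s z
      · split
        · split <;> norm_num
        · exact hp_le_one hP0 hP1 s z

lemma summable_hp_weight (hP0 : ∀ x y, 0 ≤ P x y) (hP1 : ∀ x, HasSum (P x) 1)
    (s : ℕ) (x : Fin N → ℕ) :
    Summable (fun z => P x z * (if z = 0 then (if s = 0 then (1:ℝ) else 0) else hp P s z)) := by
  refine summable_mul_of_le hP0 hP1 (fun z => ?_) (fun z => ?_) x
  · split
    · split <;> norm_num
    · exact hp_nonneg hP0 s z
  · split
    · split <;> norm_num
    · exact hp_le_one hP0 hP1 s z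

lemma hp_one (hP0 : ∀ x y, 0 ≤ P x y) (hP1 : ∀ x, HasSum (P x) 1) (x : Fin N → ℕ) :
    hp P 1 x = P x 0 := by
  dsimp [hp]
  rw [tsum_eq_single (0 : Fin N → ℕ) (fun z hz => by simp [hz])]
  simp

lemma hp_succ {s : ℕ} (hs : s ≠ 0) (x : Fin N → ℕ) :
    hp P (s+1) x = ∑' z, P x z * (if z = 0 then 0 else hp P s z) := by
  dsimp [hp]
  congr 1; funext z
  congr 1
  split
  · simp [hs]
  · rfl


lemma hp_vanish (hP0 : ∀ x y, 0 ≤ P x y) (hP1 : ∀ x, HasSum (P x) 1)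
    {b₀ : ℝ} (hb₀ : 0 < b₀)
    (hskip : ∀ x, ∑' y : {y : Fin N → ℕ // |l1 y - l1 x| ≤ b₀}, P x (y : Fin N → ℕ) = 1) :
    ∀ (s : ℕ) (x : Fin N → ℕ), (s : ℝ) * b₀ < l1 x → hp P s x = 0
  | 0, x, h => rfl
  | (s+1), x, h => by
      dsimp [hp]
      have : ∀ z, P x z * (if z = 0 then (if s = 0 then (1:ℝ) else 0) else hp P s z) = 0 := by
        intro z
        by_cases hfar : b₀ < |l1 z - l1 x|
        · rw [P_zero_of_far hP0 hP1 hskip hfar, zero_mul]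
        · push_neg at hfar
          have hlz : (s : ℝ) * b₀ < l1 z := by
            have h1 : l1 x - l1 z ≤ b₀ := (abs_le.mp (abs_sub_comm (l1 z) (l1 x) ▸ hfar)).2
            have h2 : ((s:ℝ)+1) * b₀ < l1 x := by push_cast at h ⊢; linarith
            nlinarith
          have hzne : z ≠ 0 := ne_zero_of_l1_pos (lt_of_le_of_lt
            (mul_nonneg (Nat.cast_nonneg s) hb₀.le) hlz)
          rw [if_neg hzne, hp_vanish hP0 hP1 hb₀ hskip s z hlz, mul_zero]
      rw [tsum_congr this, tsum_zero]

lemma Scum_le_one (hP0 : ∀ x y, 0 ≤ P x y) (hP1 : ∀ x, HasSum (P x) 1) :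
    ∀ (n : ℕ) (x : Fin N → ℕ), ∑ s ∈ Finset.range n, hp P (s+1) x ≤ 1
  | 0, x => by simp
  | (n+1), x => by
      rw [Finset.sum_range_succ']
      have hstep : ∀ i : ℕ, hp P (i+1+1) x = ∑' z, P x z * (if z = 0 then 0 else hp P (i+1) z) :=
        fun i => hp_succ (Nat.succ_ne_zero i) x
      have hsummable : ∀ i : ℕ,
          Summable (fun z => P x z * (if z = 0 then (0:ℝ) else hp P (i+1) z)) := by
        intro i
        refine summable_mul_of_le hP0 hP1 (fun z => ?_) (fun z => ?_) x
        · by_cases hz : z = 0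
          · simp [hz]
          · simp only [if_neg hz]; exact hp_nonneg hP0 _ z
        · by_cases hz : z = 0
          · simp [hz]
          · simp only [if_neg hz]; exact hp_le_one hP0 hP1 _ z
      have hswap : ∑ i ∈ Finset.range n, hp P (i+1+1) x
          = ∑' z, P x z * (if z = 0 then 0 else ∑ i ∈ Finset.range n, hp P (i+1) z) := by
        calc ∑ i ∈ Finset.range n, hp P (i+1+1) x
            = ∑ i ∈ Finset.range n, ∑' z, P x z * (if z = 0 then 0 else hp P (i+1) z) := by
              exact Finset.sum_congr rfl fun i _ => hstep i
          _ = ∑' z, ∑ i ∈ Finset.range n, P x z * (if z = 0 then 0 else hp P (i+1) z) :=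
              (Summable.tsum_finsetSum (fun i _ => hsummable i)).symm
          _ = ∑' z, P x z * (if z = 0 then 0 else ∑ i ∈ Finset.range n, hp P (i+1) z) := by
              refine tsum_congr fun z => ?_
              by_cases hz : z = 0 <;> simp [hz, Finset.mul_sum]
      rw [hswap, hp_one hP0 hP1]
      have hle : ∑' z, P x z * (if z = 0 then 0 else ∑ i ∈ Finset.range n, hp P (i+1) z)
          ≤ ∑' z, (if z = 0 then 0 else P x z) := by
        refine Summable.tsum_le_tsum (fun z => ?_) ?_ ?_
        · by_cases hz : z = 0
          · simp [hz]
          · simp only [if_neg hz]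
            exact mul_le_of_le_one_right (hP0 x z) (Scum_le_one hP0 hP1 n z)
        · refine summable_mul_of_le hP0 hP1 (fun z => ?_) (fun z => ?_) x
          · by_cases hz : z = 0
            · simp [hz]
            · simp only [if_neg hz]
              exact Finset.sum_nonneg fun i _ => hp_nonneg hP0 _ z
          · by_cases hz : z = 0
            · simp [hz]
            · simp only [if_neg hz]; exact Scum_le_one hP0 hP1 n z
        · refine Summable.of_nonneg_of_le (fun z => ?_) (fun z => ?_) (hP1 x).summable
          · by_cases hz : z = 0
            · simp [hz]
            · simp only [if_neg hz]; exact hP0 x z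
          · by_cases hz : z = 0
            · simp [hz]; exact hP0 x 0
            · simp [if_neg hz]
      have hsplit := Summable.tsum_eq_add_tsum_ite (hP1 x).summable (0 : Fin N → ℕ)
      rw [(hP1 x).tsum_eq] at hsplit
      linarith [hsplit]

lemma iterK_zero_self : iterK P 0 (0 : Fin N → ℕ) 0 = 1 := by simp [iterK]

/-- First-passage decomposition: `P^{t+1}(x,0) = ∑_{s≤t} f_{s+1}(x) P^{t-s}(0,0)`. -/
lemma renewal (hP0 : ∀ x y, 0 ≤ P x y) (hP1 : ∀ x, HasSum (P x) 1) :
    ∀ (t : ℕ) (x : Fin N → ℕ), iterK P (t+1) x 0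
      = ∑ s ∈ Finset.range (t+1), hp P (s+1) x * iterK P (t - s) 0 0
  | 0, x => by
      have h1 : iterK P 1 x 0 = P x 0 := by
        show (∑' z, P x z * iterK P 0 z 0) = P x 0
        rw [tsum_eq_single (0 : Fin N → ℕ) (fun z hz => by simp [iterK, hz])]
        simp [iterK]
      rw [h1]
      simp [hp_one hP0 hP1, iterK]
  | (t+1), x => by
      have hIH := renewal hP0 hP1 t
      show (∑' z, P x z * iterK P (t+1) z 0) = _
      have hterm : ∀ z, P x z * iterK P (t+1) z 0
          = ∑ s ∈ Finset.range (t+1), P x z * (hp P (s+1) z * iterK P (t - s) 0 0) := by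
        intro z; rw [hIH z, Finset.mul_sum]
      have hsummand : ∀ s : ℕ, s ∈ Finset.range (t+1) →
          Summable (fun z => P x z * (hp P (s+1) z * iterK P (t - s) 0 0)) := by
        intro s _
        refine summable_mul_of_le hP0 hP1 (fun z => ?_) (fun z => ?_) x
        · exact mul_nonneg (hp_nonneg hP0 _ z) (iterK_nonneg hP0 _ 0 0)
        · exact mul_le_one₀ (hp_le_one hP0 hP1 _ z) (iterK_nonneg hP0 _ 0 0)
            (iterK_le_one hP0 hP1 _ 0 0)
      have hswap : (∑' z, P x z * iterK P (t+1) z 0)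
          = ∑ s ∈ Finset.range (t+1), ∑' z, P x z * (hp P (s+1) z * iterK P (t - s) 0 0) := by
        rw [tsum_congr hterm, Summable.tsum_finsetSum hsummand]
      rw [hswap]
      -- evaluate each inner tsum
      have hinner : ∀ s : ℕ, (∑' z, P x z * (hp P (s+1) z * iterK P (t - s) 0 0))
          = (P x 0 * hp P (s+1) 0 + hp P (s+2) x) * iterK P (t - s) 0 0 := by
        intro s
        have hsummu : Summable (fun z => P x z * hp P (s+1) z) := by
          refine summable_mul_of_le hP0 hP1 (fun z => hp_nonneg hP0 _ z)
            (fun z => hp_le_one hP0 hP1 _ z) x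
        have h1 : (∑' z, P x z * (hp P (s+1) z * iterK P (t - s) 0 0))
            = (∑' z, P x z * hp P (s+1) z) * iterK P (t - s) 0 0 := by
          rw [← tsum_mul_right]
          exact tsum_congr fun z => by ring
        have h2 : (∑' z, P x z * hp P (s+1) z)
            = P x 0 * hp P (s+1) 0 + hp P (s+2) x := by
          have h3 := Summable.tsum_eq_add_tsum_ite hsummu (0 : Fin N → ℕ)
          have h4 : (∑' z, if z = 0 then 0 else P x z * hp P (s+1) z) = hp P (s+2) x := by
            rw [hp_succ (Nat.succ_ne_zero s) x]
            exact tsum_congr fun z => by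
              by_cases hz : z = 0 <;> simp [hz]
          rw [h3, h4]
        rw [h1, h2]
      rw [Finset.sum_congr rfl fun s _ => hinner s]
      -- now rearrange the finite sums
      have hrhs : ∑ s ∈ Finset.range (t+1+1), hp P (s+1) x * iterK P (t+1-s) 0 0
          = hp P 1 x * iterK P (t+1) 0 0
            + ∑ i ∈ Finset.range (t+1), hp P (i+2) x * iterK P (t - i) 0 0 := by
        rw [Finset.sum_range_succ']
        simp only [Nat.succ_sub_succ, Nat.sub_zero]
        rw [add_comm]
      rw [hrhs, hp_one hP0 hP1]
      rw [Finset.sum_congr rfl (fun s _ => by ring :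
        ∀ s ∈ Finset.range (t+1), (P x 0 * hp P (s+1) 0 + hp P (s+2) x) * iterK P (t-s) 0 0
          = P x 0 * (hp P (s+1) 0 * iterK P (t-s) 0 0) + hp P (s+2) x * iterK P (t-s) 0 0)]
      rw [Finset.sum_add_distrib, ← Finset.mul_sum, ← hIH 0]

variable {pim : (Fin N → ℕ) → ℝ}

lemma summable_pim_mul (hpim0 : ∀ x, 0 ≤ pim x) (hpim1 : HasSum pim 1)
    {W : (Fin N → ℕ) → ℝ} (hW0 : ∀ z, 0 ≤ W z) (hW1 : ∀ z, W z ≤ 1) :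
    Summable (fun x => pim x * W x) :=
  Summable.of_nonneg_of_le (fun x => mul_nonneg (hpim0 x) (hW0 x))
    (fun x => mul_le_of_le_one_right (hpim0 x) (hW1 x)) hpim1.summable

lemma inv_iter (hP0 : ∀ x y, 0 ≤ P x y) (hP1 : ∀ x, HasSum (P x) 1)
    (hpim0 : ∀ x, 0 ≤ pim x) (hpim1 : HasSum pim 1)
    (hinv : ∀ y, HasSum (fun x => pim x * P x y) (pim y)) :
    ∀ (t : ℕ) (y : Fin N → ℕ), (∑' x, pim x * iterK P t x y) = pim y
  | 0, y => by
      rw [tsum_eq_single y (fun x hx => by simp [iterK, hx])]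
      simp [iterK]
  | (t+1), y => by
      have hIH := inv_iter hP0 hP1 hpim0 hpim1 hinv t
      have hf0 : ∀ p : (Fin N → ℕ) × (Fin N → ℕ),
          0 ≤ pim p.1 * (P p.1 p.2 * iterK P t p.2 y) := fun p =>
        mul_nonneg (hpim0 p.1) (mul_nonneg (hP0 p.1 p.2) (iterK_nonneg hP0 t p.2 y))
      have hslice : ∀ x, Summable (fun z => pim x * (P x z * iterK P t z y)) := by
        intro x
        exact (summable_mul_of_le hP0 hP1 (fun z => iterK_nonneg hP0 t z y)
          (fun z => iterK_le_one hP0 hP1 t z y) x).mul_left (pim x)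
      have hrow : ∀ x, (∑' z, pim x * (P x z * iterK P t z y)) = pim x * iterK P (t+1) x y := by
        intro x
        rw [tsum_mul_left]
        rfl
      have hrowsummable : Summable (fun x => ∑' z, pim x * (P x z * iterK P t z y)) := by
        refine Summable.congr ?_ (fun x => (hrow x).symm)
        exact summable_pim_mul hpim0 hpim1 (fun z => iterK_nonneg hP0 _ z y)
          (fun z => iterK_le_one hP0 hP1 _ z y)
      have huncurry : Summable (fun p : (Fin N → ℕ) × (Fin N → ℕ) =>
          pim p.1 * (P p.1 p.2 * iterK P t p.2 y)) :=
        (summable_prod_of_nonneg hf0).mpr ⟨fun x => hslice x, hrowsummable⟩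
      have hswap : (∑' x, ∑' z, pim x * (P x z * iterK P t z y))
          = ∑' z, ∑' x, pim x * (P x z * iterK P t z y) :=
        (Summable.tsum_comm (f := fun x z => pim x * (P x z * iterK P t z y)) huncurry).symm
      have hcol : ∀ z, (∑' x, pim x * (P x z * iterK P t z y))
          = pim z * iterK P t z y := by
        intro z
        have : ∀ x, pim x * (P x z * iterK P t z y) = (pim x * P x z) * iterK P t z y :=
          fun x => by ring
        rw [tsum_congr this, tsum_mul_right, (hinv z).tsum_eq]
      calc (∑' x, pim x * iterK P (t+1) x y)
          = ∑' x, ∑' z, pim x * (P x z * iterK P t z y) := (tsum_congr hrow).symm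
        _ = ∑' z, ∑' x, pim x * (P x z * iterK P t z y) := hswap
        _ = ∑' z, pim z * iterK P t z y := tsum_congr hcol
        _ = pim y := hIH y

lemma summable_pim_hp (hP0 : ∀ x y, 0 ≤ P x y) (hP1 : ∀ x, HasSum (P x) 1)
    (hpim0 : ∀ x, 0 ≤ pim x) (hpim1 : HasSum pim 1) (s : ℕ) :
    Summable (fun x => pim x * hp P s x) :=
  summable_pim_mul hpim0 hpim1 (fun z => hp_nonneg hP0 s z) (fun z => hp_le_one hP0 hP1 s z)

/-- Stationary (delayed) renewal identity:
`π(0) = ∑_{s ≤ t} α_{s+1} P^{t-s}(0,0)` where `α_s = P_π(τ₀ = s)`. -/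
lemma alpha_renewal (hP0 : ∀ x y, 0 ≤ P x y) (hP1 : ∀ x, HasSum (P x) 1)
    (hpim0 : ∀ x, 0 ≤ pim x) (hpim1 : HasSum pim 1)
    (hinv : ∀ y, HasSum (fun x => pim x * P x y) (pim y)) (t : ℕ) :
    pim 0 = ∑ s ∈ Finset.range (t+1),
      (∑' x, pim x * hp P (s+1) x) * iterK P (t - s) 0 0 := by
  have h1 := (inv_iter hP0 hP1 hpim0 hpim1 hinv (t+1) 0).symm
  rw [h1, tsum_congr (fun x => by rw [renewal hP0 hP1 t x, Finset.mul_sum])]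
  rw [Summable.tsum_finsetSum (fun s _ => ?_)]
  · refine Finset.sum_congr rfl fun s _ => ?_
    rw [tsum_congr (fun x => (by ring :
        pim x * (hp P (s+1) x * iterK P (t-s) 0 0)
          = (pim x * hp P (s+1) x) * iterK P (t-s) 0 0)), tsum_mul_right]
  · refine summable_pim_mul hpim0 hpim1 (fun z => ?_) (fun z => ?_)
    · exact mul_nonneg (hp_nonneg hP0 _ z) (iterK_nonneg hP0 _ 0 0)
    · exact mul_le_one₀ (hp_le_one hP0 hP1 _ z) (iterK_nonneg hP0 _ 0 0)
        (iterK_le_one hP0 hP1 _ 0 0)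

lemma A_eq (hP0 : ∀ x y, 0 ≤ P x y) (hP1 : ∀ x, HasSum (P x) 1)
    (hpim0 : ∀ x, 0 ≤ pim x) (hpim1 : HasSum pim 1) (n : ℕ) :
    ∑ s ∈ Finset.range n, (∑' x, pim x * hp P (s+1) x)
      = ∑' x, pim x * ∑ s ∈ Finset.range n, hp P (s+1) x := by
  rw [← Summable.tsum_finsetSum (fun s _ => summable_pim_hp hP0 hP1 hpim0 hpim1 (s+1))]
  exact tsum_congr fun x => by rw [Finset.mul_sum]

lemma A_le_one (hP0 : ∀ x y, 0 ≤ P x y) (hP1 : ∀ x, HasSum (P x) 1)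
    (hpim0 : ∀ x, 0 ≤ pim x) (hpim1 : HasSum pim 1) (n : ℕ) :
    ∑ s ∈ Finset.range n, (∑' x, pim x * hp P (s+1) x) ≤ 1 := by
  rw [A_eq hP0 hP1 hpim0 hpim1 n]
  have h := Summable.tsum_le_tsum (f := fun x => pim x * ∑ s ∈ Finset.range n, hp P (s+1) x)
    (g := pim)
    (fun x => mul_le_of_le_one_right (hpim0 x) (Scum_le_one hP0 hP1 n x))
    (summable_pim_mul hpim0 hpim1
      (fun z => Finset.sum_nonneg fun s _ => hp_nonneg hP0 _ z)
      (fun z => Scum_le_one hP0 hP1 n z)) hpim1.summable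
  rwa [hpim1.tsum_eq] at h

lemma A_nonneg (hP0 : ∀ x y, 0 ≤ P x y)
    (hpim0 : ∀ x, 0 ≤ pim x) (n : ℕ) :
    0 ≤ ∑ s ∈ Finset.range n, (∑' x, pim x * hp P (s+1) x) :=
  Finset.sum_nonneg fun s _ => tsum_nonneg fun x => mul_nonneg (hpim0 x) (hp_nonneg hP0 _ x)

/-- Mass of `π` beyond L¹-radius `n·b₀` is at most `P_π(τ₀ > n) = 1 - A n`. -/
lemma tail_le (hP0 : ∀ x y, 0 ≤ P x y) (hP1 : ∀ x, HasSum (P x) 1)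
    {b₀ : ℝ} (hb₀ : 0 < b₀)
    (hskip : ∀ x, ∑' y : {y : Fin N → ℕ // |l1 y - l1 x| ≤ b₀}, P x (y : Fin N → ℕ) = 1)
    (hpim0 : ∀ x, 0 ≤ pim x) (hpim1 : HasSum pim 1)
    (n : ℕ) :
    (∑' x, Set.indicator {x : Fin N → ℕ | (n : ℝ) * b₀ < l1 x} pim x)
      ≤ 1 - ∑ s ∈ Finset.range n, (∑' x, pim x * hp P (s+1) x) := by
  set s : Set (Fin N → ℕ) := {x | (n : ℝ) * b₀ < l1 x} with hsdef
  have hA : ∑ s ∈ Finset.range n, (∑' x, pim x * hp P (s+1) x)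
      ≤ ∑' x, Set.indicator sᶜ pim x := by
    rw [A_eq hP0 hP1 hpim0 hpim1 n]
    refine Summable.tsum_le_tsum (fun x => ?_) ?_ (hpim1.summable.indicator _)
    · by_cases hx : x ∈ s
      · have hvan : ∀ k ∈ Finset.range n, hp P (k+1) x = 0 := by
          intro k hk
          refine hp_vanish hP0 hP1 hb₀ hskip (k+1) x ?_
          have hkn : (k:ℝ) + 1 ≤ n := by
            have := Finset.mem_range.mp hk; exact_mod_cast this
          have := hx
          rw [hsdef, Set.mem_setOf_eq] at this
          push_cast
          nlinarith
        rw [Finset.sum_congr rfl hvan]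
        simp [Set.indicator_of_notMem (by simpa using hx : x ∉ sᶜ)]
      · rw [Set.indicator_of_mem (by simpa using hx) pim]
        exact mul_le_of_le_one_right (hpim0 x) (Scum_le_one hP0 hP1 n x)
    · exact summable_pim_mul hpim0 hpim1
        (fun z => Finset.sum_nonneg fun s _ => hp_nonneg hP0 _ z)
        (fun z => Scum_le_one hP0 hP1 n z)
  have hsplit : (∑' x, Set.indicator s pim x) + (∑' x, Set.indicator sᶜ pim x) = 1 := by
    rw [← Summable.tsum_add (hpim1.summable.indicator _) (hpim1.summable.indicator _)]
    rw [tsum_congr (fun x => ?_), hpim1.tsum_eq]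
    exact congrFun (Set.indicator_self_add_compl s pim) x
  linarith

lemma exp_tail_summable {N : ℕ} {pim : (Fin N → ℕ) → ℝ}
    (hpim0 : ∀ x, 0 ≤ pim x) (hpim1 : HasSum pim 1)
    {b₀ q K : ℝ} (hb₀ : 0 < b₀) (hq1 : 1 < q) (hK1 : 1 ≤ K)
    (htailq : ∀ n : ℕ,
      (∑' x, Set.indicator {x : Fin N → ℕ | (n:ℝ)*b₀ < l1 x} pim x) * q^n ≤ K) :
    ∃ θ' > (0:ℝ), Summable (fun x : Fin N → ℕ => pim x * Real.exp (θ' * l1 x)) := by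
  have hq0 : 0 < q := lt_trans one_pos hq1
  set p : ℝ := Real.sqrt q with hpdef
  have hp1 : 1 < p := by
    rw [hpdef, show (1:ℝ) = Real.sqrt 1 from (Real.sqrt_one).symm]
    exact Real.sqrt_lt_sqrt zero_le_one hq1
  have hp0 : 0 < p := lt_trans one_pos hp1
  have hpq : p^2 = q := Real.sq_sqrt hq0.le
  have hpinv1 : p⁻¹ < 1 := inv_lt_one_of_one_lt₀ hp1
  have hpinv0 : 0 ≤ p⁻¹ := inv_nonneg.mpr hp0.le
  refine ⟨Real.log p / b₀, div_pos (Real.log_pos hp1) hb₀, ?_⟩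
  have hf0 : (0:(Fin N → ℕ) → ℝ) ≤ fun x => pim x * Real.exp (Real.log p / b₀ * l1 x) :=
    fun x => mul_nonneg (hpim0 x) (exp_pos _).le
  rw [summable_partition (s := fun j : ℕ => {x : Fin N → ℕ | Nat.floor (l1 x / b₀) = j})
    hf0 (fun x => ⟨Nat.floor (l1 x / b₀), rfl, fun y hy => hy.symm⟩)]
  have hwt : ∀ (j : ℕ) (x : Fin N → ℕ), Nat.floor (l1 x / b₀) = j →
      Real.exp (Real.log p / b₀ * l1 x) ≤ p^(j+1) := by
    intro j x hxj
    have hfl : l1 x < ((j:ℝ)+1)*b₀ := by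
      have h1 : l1 x / b₀ < (Nat.floor (l1 x / b₀) : ℝ) + 1 := Nat.lt_floor_add_one _
      rw [hxj] at h1
      have h2 := (div_lt_iff₀ hb₀).mp h1
      linarith
    have hθl : Real.log p / b₀ * l1 x ≤ ((j:ℝ)+1) * Real.log p := by
      rw [div_mul_eq_mul_div, div_le_iff₀ hb₀]
      have hlog := (Real.log_pos hp1).le
      calc Real.log p * l1 x ≤ Real.log p * (((j:ℝ)+1)*b₀) :=
            mul_le_mul_of_nonneg_left hfl.le hlog
        _ = ((j:ℝ)+1) * Real.log p * b₀ := by ring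
    calc Real.exp (Real.log p / b₀ * l1 x) ≤ Real.exp (((j:ℝ)+1) * Real.log p) :=
          exp_le_exp.mpr hθl
      _ = p^(j+1) := by
          rw [show ((j:ℝ)+1) = ((j+1 : ℕ) : ℝ) by push_cast; ring,
            Real.exp_nat_mul, Real.exp_log hp0]
  constructor
  · intro j
    refine Summable.of_nonneg_of_le (fun x => hf0 x.1) (fun x => ?_)
      ((hpim1.summable.mul_right (p^(j+1))).subtype _)
    exact mul_le_mul_of_nonneg_left (hwt j x.1 x.2) (hpim0 x.1)
  · -- the fiber sums are dominated by a geometric series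
    have hmass : ∀ j : ℕ,
        (∑' x : {x : Fin N → ℕ | Nat.floor (l1 x / b₀) = j}, pim x.1) ≤ K*q*(q^j)⁻¹ := by
      intro j
      have hsum0 : (∑' x : {x : Fin N → ℕ | Nat.floor (l1 x / b₀) = j}, pim x.1)
          = ∑' x, Set.indicator {x : Fin N → ℕ | Nat.floor (l1 x / b₀) = j} pim x :=
        tsum_subtype _ _
      cases j with
      | zero =>
        have h1 : (∑' x, Set.indicator {x : Fin N → ℕ | Nat.floor (l1 x / b₀) = 0} pim x) ≤ 1 := by
          have h := Summable.tsum_le_tsum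
            (f := fun x => Set.indicator {x : Fin N → ℕ | Nat.floor (l1 x / b₀) = 0} pim x)
            (g := pim)
            (fun x => Set.indicator_le_self' (fun y _ => hpim0 y) x)
            (hpim1.summable.indicator _) hpim1.summable
          rwa [hpim1.tsum_eq] at h
        rw [hsum0]
        have h2 : K*q*((q:ℝ)^0)⁻¹ = K*q := by norm_num
        rw [h2]
        nlinarith
      | succ i =>
        have hsub : {x : Fin N → ℕ | Nat.floor (l1 x / b₀) = i+1}
            ⊆ {x : Fin N → ℕ | (i:ℝ)*b₀ < l1 x} := by
          intro x hx
          have hxm : Nat.floor (l1 x / b₀) = i+1 := hx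
          have h1 : ((i+1:ℕ):ℝ) ≤ l1 x / b₀ := by
            rw [← hxm]
            exact Nat.floor_le (div_nonneg (l1_nonneg x) hb₀.le)
          have h2 := (le_div_iff₀ hb₀).mp h1
          push_cast at h2
          have : (i:ℝ)*b₀ < ((i:ℝ)+1)*b₀ := by nlinarith
          exact lt_of_lt_of_le this h2
        have h1 : (∑' x, Set.indicator {x : Fin N → ℕ | Nat.floor (l1 x / b₀) = i+1} pim x)
            ≤ ∑' x, Set.indicator {x : Fin N → ℕ | (i:ℝ)*b₀ < l1 x} pim x := by
          refine Summable.tsum_le_tsum (fun x => ?_) (hpim1.summable.indicator _)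
            (hpim1.summable.indicator _)
          exact Set.indicator_le_indicator_of_subset hsub hpim0 x
        have h3 := htailq i
        have h4 : (∑' x, Set.indicator {x : Fin N → ℕ | (i:ℝ)*b₀ < l1 x} pim x)
            ≤ K * (q^i)⁻¹ := by
          rw [← le_div_iff₀ (pow_pos hq0 i)] at h3
          rwa [div_eq_mul_inv] at h3
        have h5 : K * (q^i)⁻¹ = K*q*(q^(i+1))⁻¹ := by
          rw [pow_succ]; field_simp
        rw [hsum0]
        exact h1.trans (h4.trans_eq h5)
    refine Summable.of_nonneg_of_le
      (fun j => tsum_nonneg fun x => hf0 x.1) (fun j => ?_)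
      (((summable_geometric_of_lt_one hpinv0 hpinv1).mul_left (K*q*p)))
    have hsummand : Summable (fun x : {x : Fin N → ℕ | Nat.floor (l1 x / b₀) = j} =>
        pim x.1 * Real.exp (Real.log p / b₀ * l1 x.1)) := by
      refine Summable.of_nonneg_of_le (fun x => hf0 x.1) (fun x => ?_)
        ((hpim1.summable.mul_right (p^(j+1))).subtype _)
      exact mul_le_mul_of_nonneg_left (hwt j x.1 x.2) (hpim0 x.1)
    have hsubpim : Summable (fun x : {x : Fin N → ℕ | Nat.floor (l1 x / b₀) = j} => pim x.1) :=
      hpim1.summable.subtype _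
    calc (∑' x : {x : Fin N → ℕ | Nat.floor (l1 x / b₀) = j},
            pim x.1 * Real.exp (Real.log p / b₀ * l1 x.1))
        ≤ ∑' x : {x : Fin N → ℕ | Nat.floor (l1 x / b₀) = j}, pim x.1 * p^(j+1) := by
          refine Summable.tsum_le_tsum (fun x => ?_) hsummand (hsubpim.mul_right _)
          exact mul_le_mul_of_nonneg_left (hwt j x.1 x.2) (hpim0 x.1)
      _ = (∑' x : {x : Fin N → ℕ | Nat.floor (l1 x / b₀) = j}, pim x.1) * p^(j+1) :=
          tsum_mul_right
      _ ≤ (K*q*(q^j)⁻¹) * p^(j+1) := by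
          refine mul_le_mul_of_nonneg_right (hmass j) (pow_nonneg hp0.le _)
      _ = K*q*p * (p⁻¹)^j := by
          rw [← hpq, inv_pow]
          have hpj : (p:ℝ)^j ≠ 0 := pow_ne_zero _ hp0.ne'
          have he : ((p^2)^j : ℝ) = p^j * p^j := by rw [← pow_mul, two_mul, pow_add]
          rw [he, pow_succ]
          field_simp
          ring

end ExpTail

section KeySeq
open Finset

/-- Abstract renewal bound: if the delayed renewal identity `π0 = ∑ α_{s+1} u_{t-s}` holds,
`u` converges to `π0` geometrically, and the `α` are subprobabilities, then the tails
`1 - ∑_{s<n} α_{s+1}` decay geometrically. -/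
lemma key_seq {π0 C ρ q D : ℝ} {α u : ℕ → ℝ}
    (hπ0 : 0 < π0) (hπ1 : π0 ≤ 1)
    (hα0 : ∀ s, 0 ≤ α s)
    (hA1 : ∀ n, ∑ s ∈ range n, α (s+1) ≤ 1)
    (hren : ∀ t : ℕ, π0 = ∑ s ∈ range (t+1), α (s+1) * u (t-s))
    (hr : ∀ j : ℕ, |u j - π0| ≤ C * ρ^j) (hC1 : 1 ≤ C)
    (hρ0 : 0 ≤ ρ) (hq1 : 1 < q) (hρq : ρ*q < 1)
    (hD : ∀ k : ℕ, ∑ j ∈ range k, (ρ*q)^j ≤ D) (hD1 : 1 ≤ D)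
    (hqsmall : (q-1)*(2*C*D) ≤ π0) :
    ∀ n : ℕ, (1 - ∑ s ∈ range n, α (s+1)) * q^n ≤ 2*q^2*C*D/π0 := by
  have hq0 : 0 < q := lt_trans one_pos hq1
  have hC0 : 0 < C := lt_of_lt_of_le one_pos hC1
  have hD0 : 0 < D := lt_of_lt_of_le one_pos hD1
  set A : ℕ → ℝ := fun n => ∑ s ∈ range n, α (s+1) with hAdef
  have hA0 : ∀ n, 0 ≤ A n := fun n => Finset.sum_nonneg fun s _ => hα0 _
  -- key inequality
  have hkey : ∀ t : ℕ, π0 * (1 - A (t+1)) ≤ C * ∑ s ∈ range (t+1), α (s+1) * ρ^(t-s) := by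
    intro t
    have h1 : π0 = π0 * A (t+1) + ∑ s ∈ range (t+1), α (s+1) * (u (t-s) - π0) := by
      calc π0 = ∑ s ∈ range (t+1), α (s+1) * u (t-s) := hren t
        _ = ∑ s ∈ range (t+1), (π0 * α (s+1) + α (s+1) * (u (t-s) - π0)) :=
            Finset.sum_congr rfl fun s _ => by ring
        _ = π0 * A (t+1) + ∑ s ∈ range (t+1), α (s+1) * (u (t-s) - π0) := by
            rw [Finset.sum_add_distrib, ← Finset.mul_sum]
    have h2 : ∑ s ∈ range (t+1), α (s+1) * (u (t-s) - π0)
        ≤ ∑ s ∈ range (t+1), α (s+1) * (C * ρ^(t-s)) := by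
      refine Finset.sum_le_sum fun s _ => ?_
      exact mul_le_mul_of_nonneg_left ((le_abs_self _).trans (hr (t-s))) (hα0 _)
    have h3 : ∑ s ∈ range (t+1), α (s+1) * (C * ρ^(t-s))
        = C * ∑ s ∈ range (t+1), α (s+1) * ρ^(t-s) := by
      rw [Finset.mul_sum]; exact Finset.sum_congr rfl fun s _ => by ring
    nlinarith [h1, h2, h3]
  -- the generating-function bound
  set G : ℕ → ℝ := fun n => ∑ s ∈ range n, α (s+1) * q^(s+1) with hGdef
  have hG0 : ∀ n, 0 ≤ G n := fun n =>
    Finset.sum_nonneg fun s _ => mul_nonneg (hα0 _) (pow_nonneg hq0.le _)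
  have hG : ∀ n, G n ≤ 2*q := by
    intro n
    set S1 : ℝ := ∑ t ∈ range n, q^(t+1) * (π0 * (1 - A (t+1))) with hS1def
    -- upper bound for S1
    have hub : S1 ≤ C * (D * G n) := by
      have h1 : S1 ≤ ∑ t ∈ range n, q^(t+1) * (C * ∑ s ∈ range (t+1), α (s+1) * ρ^(t-s)) := by
        refine Finset.sum_le_sum fun t _ => ?_
        exact mul_le_mul_of_nonneg_left (hkey t) (pow_nonneg hq0.le _)
      have h2 : ∑ t ∈ range n, q^(t+1) * (C * ∑ s ∈ range (t+1), α (s+1) * ρ^(t-s))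
          = C * ∑ t ∈ range n, ∑ s ∈ range (t+1), α (s+1) * (q^(t+1) * ρ^(t-s)) := by
        rw [Finset.mul_sum]
        refine Finset.sum_congr rfl fun t _ => ?_
        rw [Finset.mul_sum, Finset.mul_sum, Finset.mul_sum]
        exact Finset.sum_congr rfl fun s _ => by ring
      have h3 : ∑ t ∈ range n, ∑ s ∈ range (t+1), α (s+1) * (q^(t+1) * ρ^(t-s))
          = ∑ s ∈ range n, ∑ t ∈ Finset.Ico s n, α (s+1) * (q^(t+1) * ρ^(t-s)) := by
        have h := Finset.sum_Ico_Ico_comm 0 n (fun i j => α (i+1) * (q^(j+1) * ρ^(j-i)))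
        simp only [Nat.Ico_zero_eq_range] at h
        exact h.symm
      have h4 : ∀ s, s ∈ range n → ∑ t ∈ Finset.Ico s n, α (s+1) * (q^(t+1) * ρ^(t-s))
          ≤ α (s+1) * (q^(s+1) * D) := by
        intro s hs
        have hre : ∑ t ∈ Finset.Ico s n, α (s+1) * (q^(t+1) * ρ^(t-s))
            = α (s+1) * (q^(s+1) * ∑ j ∈ range (n-s), (ρ*q)^j) := by
          rw [Finset.sum_Ico_eq_sum_range]
          rw [Finset.mul_sum, Finset.mul_sum]
          refine Finset.sum_congr rfl fun j _ => ?_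
          have he1 : s + j - s = j := by omega
          rw [he1]
          rw [mul_pow, pow_add]
          ring
        rw [hre]
        refine mul_le_mul_of_nonneg_left ?_ (hα0 _)
        exact mul_le_mul_of_nonneg_left (hD _) (pow_nonneg hq0.le _)
      have h5 : ∑ s ∈ range n, ∑ t ∈ Finset.Ico s n, α (s+1) * (q^(t+1) * ρ^(t-s))
          ≤ D * G n := by
        calc ∑ s ∈ range n, ∑ t ∈ Finset.Ico s n, α (s+1) * (q^(t+1) * ρ^(t-s))
            ≤ ∑ s ∈ range n, α (s+1) * (q^(s+1) * D) := Finset.sum_le_sum h4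
          _ = D * G n := by
              rw [hGdef, Finset.mul_sum]
              exact Finset.sum_congr rfl fun s _ => by ring
      calc S1 ≤ C * ∑ t ∈ range n, ∑ s ∈ range (t+1), α (s+1) * (q^(t+1) * ρ^(t-s)) := by
            rw [← h2]; exact h1
        _ = C * ∑ s ∈ range n, ∑ t ∈ Finset.Ico s n, α (s+1) * (q^(t+1) * ρ^(t-s)) := by
            rw [h3]
        _ ≤ C * (D * G n) := mul_le_mul_of_nonneg_left h5 hC0.le
    -- lower bound for S1
    have hlb : π0 * ∑ s ∈ range n, α (s+1) * ∑ t ∈ range s, q^(t+1) ≤ S1 := by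
      have h1 : ∀ t, t ∈ range n → A n - A (t+1) ≤ 1 - A (t+1) := fun t _ =>
        sub_le_sub_right (show A n ≤ 1 from hA1 n) _
      have h2 : ∀ t, t ∈ range n → A n - A (t+1) = ∑ s ∈ Finset.Ico (t+1) n, α (s+1) := by
        intro t ht
        rw [Finset.sum_Ico_eq_sub _ (Nat.succ_le_of_lt (Finset.mem_range.mp ht))]
      have h3 : ∑ t ∈ range n, q^(t+1) * (π0 * ∑ s ∈ Finset.Ico (t+1) n, α (s+1)) ≤ S1 := by
        refine Finset.sum_le_sum fun t ht => ?_
        refine mul_le_mul_of_nonneg_left ?_ (pow_nonneg hq0.le _)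
        refine mul_le_mul_of_nonneg_left ?_ hπ0.le
        rw [← h2 t ht]; exact h1 t ht
      have h4 : ∑ t ∈ range n, q^(t+1) * (π0 * ∑ s ∈ Finset.Ico (t+1) n, α (s+1))
          = π0 * ∑ t ∈ range n, ∑ s ∈ Finset.Ico (t+1) n, α (s+1) * q^(t+1) := by
        rw [Finset.mul_sum]
        refine Finset.sum_congr rfl fun t _ => ?_
        rw [Finset.mul_sum, Finset.mul_sum, Finset.mul_sum]
        exact Finset.sum_congr rfl fun s _ => by ring
      have h5 : ∑ t ∈ range n, ∑ s ∈ Finset.Ico (t+1) n, α (s+1) * q^(t+1)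
          = ∑ s ∈ range n, α (s+1) * ∑ t ∈ range s, q^(t+1) := by
        have h := Finset.sum_Ico_Ico_comm' 0 n (fun i j => α (j+1) * q^(i+1))
        simp only [Nat.Ico_zero_eq_range] at h
        rw [h]
        refine Finset.sum_congr rfl fun s _ => ?_
        rw [Finset.mul_sum]
      calc π0 * ∑ s ∈ range n, α (s+1) * ∑ t ∈ range s, q^(t+1)
          = π0 * ∑ t ∈ range n, ∑ s ∈ Finset.Ico (t+1) n, α (s+1) * q^(t+1) := by rw [h5]
        _ = ∑ t ∈ range n, q^(t+1) * (π0 * ∑ s ∈ Finset.Ico (t+1) n, α (s+1)) := h4.symm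
        _ ≤ S1 := h3
    -- geometric sum identity
    have hgeom : ∀ s : ℕ, (∑ t ∈ range s, q^(t+1)) * (q-1) = q^(s+1) - q := by
      intro s
      have h := geom_sum_mul q s
      have h2 : ∑ t ∈ range s, q^(t+1) = q * ∑ t ∈ range s, q^t := by
        rw [Finset.mul_sum]; exact Finset.sum_congr rfl fun t _ => by ring
      rw [h2]
      calc q * (∑ t ∈ range s, q^t) * (q-1) = q * ((∑ t ∈ range s, q^t) * (q-1)) := by ring
        _ = q * (q^s - 1) := by rw [h]
        _ = q^(s+1) - q := by ring
    -- combine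
    have hcomb : π0 * (G n - q * A n) ≤ (q-1) * (C * (D * G n)) := by
      have hq1' : 0 < q - 1 := by linarith
      have e1 : (π0 * ∑ s ∈ range n, α (s+1) * ∑ t ∈ range s, q^(t+1)) * (q-1)
          = π0 * ∑ s ∈ range n, α (s+1) * (q^(s+1) - q) := by
        rw [Finset.mul_sum, Finset.sum_mul, Finset.mul_sum]
        refine Finset.sum_congr rfl fun s _ => ?_
        have := hgeom s
        calc π0 * (α (s+1) * ∑ t ∈ range s, q^(t+1)) * (q-1)
            = π0 * (α (s+1) * ((∑ t ∈ range s, q^(t+1)) * (q-1))) := by ring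
          _ = π0 * (α (s+1) * (q^(s+1) - q)) := by rw [this]
      have e2 : ∑ s ∈ range n, α (s+1) * (q^(s+1) - q) = G n - q * A n := by
        rw [hGdef, hAdef, Finset.mul_sum, ← Finset.sum_sub_distrib]
        exact Finset.sum_congr rfl fun s _ => by ring
      have e3 : (π0 * ∑ s ∈ range n, α (s+1) * ∑ t ∈ range s, q^(t+1)) * (q-1) ≤ S1 * (q-1) :=
        mul_le_mul_of_nonneg_right hlb hq1'.le
      have e4 : S1 * (q-1) ≤ C * (D * G n) * (q-1) :=
        mul_le_mul_of_nonneg_right hub hq1'.le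
      calc π0 * (G n - q * A n) = π0 * ∑ s ∈ range n, α (s+1) * (q^(s+1) - q) := by rw [e2]
        _ = (π0 * ∑ s ∈ range n, α (s+1) * ∑ t ∈ range s, q^(t+1)) * (q-1) := e1.symm
        _ ≤ S1 * (q-1) := e3
        _ ≤ C * (D * G n) * (q-1) := e4
        _ = (q-1) * (C * (D * G n)) := by ring
    have hAn1 : A n ≤ 1 := hA1 n
    nlinarith [hcomb, hG0 n, hA0 n, mul_le_mul_of_nonneg_right hqsmall (hG0 n),
      mul_pos hπ0 hq0]
  -- per-term bound
  have hαq : ∀ s : ℕ, α (s+1) * q^(s+1) ≤ 2*q := by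
    intro s
    have h := Finset.single_le_sum (f := fun k => α (k+1) * q^(k+1))
      (fun k _ => mul_nonneg (hα0 _) (pow_nonneg hq0.le _))
      (Finset.self_mem_range_succ s)
    exact h.trans (hG (s+1))
  -- final tail bound
  intro n
  match n with
  | 0 =>
    simp only [Finset.range_zero, Finset.sum_empty, sub_zero, pow_zero, one_mul]
    rw [le_div_iff₀ hπ0]
    have e1 : (1:ℝ) ≤ C*D := le_trans hC1 (le_mul_of_one_le_right hC0.le hD1)
    have e2 : (1:ℝ) ≤ q^2 := by nlinarith
    nlinarith [e1, e2, hπ1]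
  | (m+1) =>
    have h1 := hkey m
    have h2 : (∑ s ∈ range (m+1), α (s+1) * ρ^(m-s)) * q^(m+1) ≤ 2*q*D := by
      have hterm : ∀ s, s ∈ range (m+1) →
          α (s+1) * ρ^(m-s) * q^(m+1) ≤ 2*q * (ρ*q)^(m-s) := by
        intro s hs
        have hms : m - s + (s+1) = m+1 := by
          have := Finset.mem_range.mp hs; omega
        have hqsplit : q^(m+1) = q^(m-s) * q^(s+1) := by
          rw [← pow_add, hms]
        calc α (s+1) * ρ^(m-s) * q^(m+1) = (α (s+1) * q^(s+1)) * (ρ^(m-s) * q^(m-s)) := by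
              rw [hqsplit]; ring
          _ ≤ 2*q * (ρ^(m-s) * q^(m-s)) := by
              refine mul_le_mul_of_nonneg_right (hαq s) ?_
              exact mul_nonneg (pow_nonneg hρ0 _) (pow_nonneg hq0.le _)
          _ = 2*q * (ρ*q)^(m-s) := by rw [mul_pow]
      calc (∑ s ∈ range (m+1), α (s+1) * ρ^(m-s)) * q^(m+1)
          = ∑ s ∈ range (m+1), α (s+1) * ρ^(m-s) * q^(m+1) := by rw [Finset.sum_mul]
        _ ≤ ∑ s ∈ range (m+1), 2*q * (ρ*q)^(m-s) := Finset.sum_le_sum hterm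
        _ = 2*q * ∑ s ∈ range (m+1), (ρ*q)^(m-s) := by rw [Finset.mul_sum]
        _ = 2*q * ∑ j ∈ range (m+1), (ρ*q)^j := by
            congr 1
            rw [← Finset.sum_range_reflect]
            refine Finset.sum_congr rfl fun j hj => ?_
            congr 1
            have := Finset.mem_range.mp hj; omega
        _ ≤ 2*q*D := by
            refine mul_le_mul_of_nonneg_left (hD _) ?_
            positivity
    have h3 : π0 * ((1 - A (m+1)) * q^(m+1)) ≤ C * (2*q*D) := by
      have := mul_le_mul_of_nonneg_right h1 (pow_nonneg hq0.le (m+1))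
      calc π0 * ((1 - A (m+1)) * q^(m+1)) = π0 * (1 - A (m+1)) * q^(m+1) := by ring
        _ ≤ C * (∑ s ∈ range (m+1), α (s+1) * ρ^(m-s)) * q^(m+1) := this
        _ = C * ((∑ s ∈ range (m+1), α (s+1) * ρ^(m-s)) * q^(m+1)) := by ring
        _ ≤ C * (2*q*D) := mul_le_mul_of_nonneg_left h2 hC0.le
    rw [le_div_iff₀ hπ0]
    calc (1 - A (m+1)) * q^(m+1) * π0 = π0 * ((1 - A (m+1)) * q^(m+1)) := by ring
      _ ≤ C * (2*q*D) := h3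
      _ ≤ 2*q^2*C*D := by
          nlinarith [mul_le_mul_of_nonneg_right hq1.le
            (by positivity : (0:ℝ) ≤ 2*q*C*D)]

end KeySeq

open ExpTail in
/-- Let `P` be a Markov transition kernel on `ℤ₊^N` which is (i) skip-free with constant
`b₀ > 0`, (ii) `0`-irreducible, and (iii) geometrically ergodic with invariant probability
measure `π`.  Then `π` has an exponential tail: `∑_x π(x) e^{θ'‖x‖} < ∞` for some `θ' > 0`. -/
theorem invariant_measure_exponential_tail (N : ℕ) (hN : 1 ≤ N)
    (P : (Fin N → ℕ) → (Fin N → ℕ) → ℝ)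
    (hP0 : ∀ x y, 0 ≤ P x y) (hP1 : ∀ x, HasSum (P x) 1)
    (b₀ : ℝ) (hb₀ : 0 < b₀)
    (hskip : ∀ x, ∑' y : {y : Fin N → ℕ // |l1 y - l1 x| ≤ b₀}, P x (y : Fin N → ℕ) = 1)
    (hirr : ∀ x, ∃ t : ℕ, 0 < iterK P t x 0)
    (pim : (Fin N → ℕ) → ℝ) (hpim0 : ∀ x, 0 ≤ pim x) (hpim1 : HasSum pim 1)
    (hinv : ∀ y, HasSum (fun x => pim x * P x y) (pim y))
    (θ : ℝ) (hθ : 0 < θ)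
    (hgeo : ∀ x y, Tendsto (fun t : ℕ => Real.exp (θ * t) * |iterK P t x y - pim y|)
      atTop (nhds 0)) :
    ∃ θ' > (0 : ℝ), Summable (fun x : Fin N → ℕ => pim x * Real.exp (θ' * l1 x)) := by
  classical
  -- π(0) > 0
  have hpos : ∃ x, 0 < pim x := by
    by_contra h; push_neg at h
    have hz : pim = fun _ => 0 := funext fun x => le_antisymm (h x) (hpim0 x)
    rw [hz] at hpim1
    simpa using hpim1.unique hasSum_zero
  obtain ⟨xs, hxs⟩ := hpos
  obtain ⟨ts, hts⟩ := hirr xs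
  have hπ0 : 0 < pim 0 := by
    have hsum : Summable (fun x => pim x * iterK P ts x 0) :=
      summable_pim_mul hpim0 hpim1 (fun z => iterK_nonneg hP0 _ z 0)
        (fun z => iterK_le_one hP0 hP1 _ z 0)
    have hle := Summable.le_tsum hsum xs (fun j _ => mul_nonneg (hpim0 j) (iterK_nonneg hP0 ts j 0))
    rw [inv_iter hP0 hP1 hpim0 hpim1 hinv ts 0] at hle
    exact lt_of_lt_of_le (mul_pos hxs hts) hle
  have hπ1 : pim 0 ≤ 1 := by
    have := le_hasSum hpim1 0 (fun j _ => hpim0 j)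
    exact this
  -- geometric bound on |P^t(0,0) - π(0)|
  have hev : ∀ᶠ t : ℕ in atTop, Real.exp (θ*t) * |iterK P t 0 0 - pim 0| < 1 :=
    (hgeo 0 0).eventually_lt_const one_pos
  obtain ⟨T, hT⟩ := eventually_atTop.mp hev
  obtain ⟨C, hC1, hCbound⟩ : ∃ C : ℝ, 1 ≤ C ∧
      ∀ t : ℕ, Real.exp (θ*t) * |iterK P t 0 0 - pim 0| ≤ C := by
    refine ⟨1 + ∑ t ∈ Finset.range T, Real.exp (θ*t) * |iterK P t 0 0 - pim 0|,
      le_add_of_nonneg_right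
        (Finset.sum_nonneg fun t _ => mul_nonneg (exp_pos _).le (abs_nonneg _)), ?_⟩
    intro t
    rcases le_or_gt T t with h | h
    · have h1 := (hT t h).le
      have h2 : (0:ℝ) ≤ ∑ t ∈ Finset.range T, Real.exp (θ*t) * |iterK P t 0 0 - pim 0| :=
        Finset.sum_nonneg fun t _ => mul_nonneg (exp_pos _).le (abs_nonneg _)
      linarith
    · have hmem : t ∈ Finset.range T := Finset.mem_range.mpr h
      have hs := Finset.single_le_sum
        (f := fun t : ℕ => Real.exp (θ*t) * |iterK P t 0 0 - pim 0|)
        (fun i _ => mul_nonneg (exp_pos _).le (abs_nonneg _)) hmem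
      linarith
  have hC0 : 0 < C := lt_of_lt_of_le one_pos hC1
  set ρ : ℝ := Real.exp (-θ) with hρdef
  have hρ0 : 0 ≤ ρ := (exp_pos _).le
  have hr : ∀ j : ℕ, |iterK P j 0 0 - pim 0| ≤ C * ρ^j := by
    intro j
    have h2 := hCbound j
    have hx : ρ^j = (Real.exp (θ*j))⁻¹ := by
      rw [hρdef, ← Real.exp_nat_mul, ← Real.exp_neg]
      congr 1; ring
    have hepos := Real.exp_pos (θ*(j:ℕ))
    have h3 : |iterK P j 0 0 - pim 0|
        = (Real.exp (θ*j))⁻¹ * (Real.exp (θ*j) * |iterK P j 0 0 - pim 0|) := by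
      field_simp
    rw [h3, hx]
    calc (Real.exp (θ*(j:ℕ)))⁻¹ * (Real.exp (θ*(j:ℕ)) * |iterK P j 0 0 - pim 0|)
        ≤ (Real.exp (θ*(j:ℕ)))⁻¹ * C :=
          mul_le_mul_of_nonneg_left h2 (inv_nonneg.mpr hepos.le)
      _ = C * (Real.exp (θ*(j:ℕ)))⁻¹ := mul_comm _ _
  -- choice of q and D
  have hE1 : Real.exp (-(θ/2)) < 1 := exp_lt_one_iff.mpr (by linarith)
  have hE0 : 0 < 1 - Real.exp (-(θ/2)) := by linarith
  set D : ℝ := (1 - Real.exp (-(θ/2)))⁻¹ with hDdef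
  have hD1 : 1 ≤ D := by
    rw [hDdef]
    rw [one_le_inv_iff₀]
    constructor
    · exact hE0
    · linarith [Real.exp_pos (-(θ/2))]
  have hD0 : 0 < D := lt_of_lt_of_le one_pos hD1
  have h2CD : (0:ℝ) < 2*C*D := by nlinarith
  obtain ⟨q, hq1, hqle, hqsub⟩ : ∃ q : ℝ, 1 < q ∧ q ≤ Real.exp (θ/2) ∧
      q - 1 ≤ pim 0/(2*C*D) := by
    refine ⟨min (Real.exp (θ/2)) (1 + pim 0/(2*C*D)), ?_, min_le_left _ _, ?_⟩
    · refine lt_min (one_lt_exp_iff.mpr (by linarith)) ?_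
      have : 0 < pim 0/(2*C*D) := div_pos hπ0 h2CD
      linarith
    · have := min_le_right (Real.exp (θ/2)) (1 + pim 0/(2*C*D))
      linarith
  have hq0 : 0 < q := lt_trans one_pos hq1
  have hρqe : ρ*q ≤ Real.exp (-(θ/2)) := by
    calc ρ*q ≤ ρ * Real.exp (θ/2) := mul_le_mul_of_nonneg_left hqle hρ0
      _ = Real.exp (-(θ/2)) := by
          rw [hρdef, ← Real.exp_add]; congr 1; ring
  have hρq1 : ρ*q < 1 := lt_of_le_of_lt hρqe hE1
  have hρq0 : 0 ≤ ρ*q := mul_nonneg hρ0 hq0.le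
  have hDgeom : ∀ k : ℕ, ∑ j ∈ Finset.range k, (ρ*q)^j ≤ D := by
    intro k
    have h1 : ∑ j ∈ Finset.range k, (ρ*q)^j ≤ ∑' j : ℕ, (ρ*q)^j :=
      Summable.sum_le_tsum (Finset.range k) (fun j _ => pow_nonneg hρq0 j)
        (summable_geometric_of_lt_one hρq0 hρq1)
    rw [tsum_geometric_of_lt_one hρq0 hρq1] at h1
    refine h1.trans ?_
    rw [hDdef]
    exact inv_anti₀ hE0 (by linarith)
  have hqsmall : (q-1)*(2*C*D) ≤ pim 0 := by
    have h3 : (q-1)*(2*C*D) ≤ (pim 0/(2*C*D))*(2*C*D) :=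
      mul_le_mul_of_nonneg_right hqsub h2CD.le
    rwa [div_mul_cancel₀ _ h2CD.ne'] at h3
  -- apply the key sequence lemma
  have htail0 := key_seq (α := fun s => ∑' x, pim x * hp P s x)
    (u := fun t => iterK P t 0 0) hπ0 hπ1
    (fun s => tsum_nonneg fun x => mul_nonneg (hpim0 x) (hp_nonneg hP0 _ x))
    (fun n => A_le_one hP0 hP1 hpim0 hpim1 n)
    (fun t => alpha_renewal hP0 hP1 hpim0 hpim1 hinv t)
    hr hC1 hρ0 hq1 hρq1 hDgeom hD1 hqsmall
  obtain ⟨K, hKval⟩ : ∃ K : ℝ, K = 2*q^2*C*D/(pim 0) := ⟨_, rfl⟩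
  have hK1 : 1 ≤ K := by
    rw [hKval, le_div_iff₀ hπ0]
    have e1 : (1:ℝ) ≤ C*D := le_trans hC1 (le_mul_of_one_le_right hC0.le hD1)
    have e2 : (1:ℝ) ≤ q^2 := by nlinarith
    nlinarith [e1, e2, hπ1]
  -- tail of π bound
  have htailq : ∀ n : ℕ,
      (∑' x, Set.indicator {x : Fin N → ℕ | (n : ℝ) * b₀ < l1 x} pim x) * q^n ≤ K := by
    intro n
    have h1 := tail_le hP0 hP1 hb₀ hskip hpim0 hpim1 n
    have h2 : (∑' x, Set.indicator {x : Fin N → ℕ | (n : ℝ) * b₀ < l1 x} pim x) * q^n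
        ≤ (1 - ∑ s ∈ Finset.range n, (∑' x, pim x * hp P (s+1) x)) * q^n :=
      mul_le_mul_of_nonneg_right h1 (pow_nonneg hq0.le n)
    rw [hKval]
    exact h2.trans (htail0 n)
  exact exp_tail_summable hpim0 hpim1 hb₀ hq1 hK1 htailq
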